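/- The hyperparameter combining rule [γ^{j+1}]_m = (1/d_m) Σ_{t=1}^T g_{tm} [γ̃_t^{j+1}]_m, together with the per-RB updates [γ_t^{j+1}]_i = (1/N) Σ_{n=1}^N ([Σ_t^{j+1}]_{i,i} + |[μ_{tn}^{j+1}]_i|²), is the unique maximizer of the EM surrogate Q(γ) = Σ_{t=1}^T E[log p(Z_t; γ_t) | Y_t; γ^j] over γ ∈ R_+^M, where the prior couples the hyperparameter γ_m across all RBs t with g_{tm} = 1. -/

import Mathlib

open scoped BigOperators

/-- **The IRSA hyperparameter combining rule is the unique M-step maximizer**: for each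
user `m`, with per-RB posterior quantities `[Σ_t]_{m,m} ≥ 0` and posterior means
`[μ_{tn}]_m`, the EM surrogate term for user `m`,
`Q_m(γ) = -Σ_{t: g_{tm}=1} ( N log γ + (Σ_n ([Σ_t]_{m,m} + |[μ_{tn}]_m|²)) / γ )`,
is uniquely maximized over `γ > 0` at
`γ_new = (1/d_m) Σ_{t: g_{tm}=1} (1/N) Σ_n ([Σ_t]_{m,m} + |[μ_{tn}]_m|²)`,
i.e. the combining rule `[γ^{j+1}]_m = (1/d_m) Σ_t g_{tm} [γ̃_t^{j+1}]_m` applied to the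
per-RB updates `[γ_t^{j+1}]_m = (1/N) Σ_n ([Σ_t]_{m,m} + |[μ_{tn}]_m|²)`. -/
theorem combining_rule_unique_em_maximizer (T N M : ℕ) (hN : 0 < N)
    (g : Fin T → Fin M → Bool) (m : Fin M)
    (hd : 0 < (Finset.univ.filter fun t : Fin T => g t m = true).card)
    (Sdiag : Fin T → ℝ) (hS : ∀ t, 0 ≤ Sdiag t)
    (μv : Fin T → Fin N → ℂ)
    (γRB : Fin T → ℝ)
    (hγRB : ∀ t, γRB t = (1 / (N : ℝ)) * ∑ n : Fin N, (Sdiag t + ‖μv t n‖ ^ 2))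
    (γnew : ℝ)
    (hγnew : γnew = (∑ t ∈ Finset.univ.filter fun t : Fin T => g t m = true, γRB t)
        / ((Finset.univ.filter fun t : Fin T => g t m = true).card : ℝ))
    (hpos : 0 < γnew) :
    ∀ γ : ℝ, 0 < γ → γ ≠ γnew →
      (-(∑ t ∈ Finset.univ.filter fun t : Fin T => g t m = true,
          ((N : ℝ) * Real.log γ + (∑ n : Fin N, (Sdiag t + ‖μv t n‖ ^ 2)) / γ)))
      < (-(∑ t ∈ Finset.univ.filter fun t : Fin T => g t m = true,
          ((N : ℝ) * Real.log γnew + (∑ n : Fin N, (Sdiag t + ‖μv t n‖ ^ 2)) / γnew))) := by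
  intro γ hγ hne
  set F := Finset.univ.filter fun t : Fin T => g t m = true with hF
  have hd' : (0:ℝ) < (F.card : ℝ) := by exact_mod_cast hd
  have hNR : (0:ℝ) < (N:ℝ) := by exact_mod_cast hN
  set S : ℝ := ∑ t ∈ F, ∑ n : Fin N, (Sdiag t + ‖μv t n‖ ^ 2) with hSdef
  have hSval : S = (F.card : ℝ) * (N : ℝ) * γnew := by
    have h1 : ∑ t ∈ F, γRB t = S / (N:ℝ) := by
      rw [hSdef, Finset.sum_div]
      exact Finset.sum_congr rfl fun t _ => by rw [hγRB t]; field_simp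
    rw [hγnew, h1]
    field_simp
  have hsum : ∀ x : ℝ, ∑ t ∈ F,
      ((N:ℝ) * Real.log x + (∑ n : Fin N, (Sdiag t + ‖μv t n‖ ^ 2)) / x)
      = (F.card : ℝ) * ((N:ℝ) * Real.log x) + S / x := by
    intro x
    rw [Finset.sum_add_distrib, Finset.sum_const, nsmul_eq_mul, hSdef, Finset.sum_div]
  rw [hsum, hsum, neg_lt_neg_iff, hSval]
  have key : Real.log γnew + 1 < Real.log γ + γnew / γ := by
    have hne' : γnew / γ ≠ 1 := by
      intro h'
      apply hne
      field_simp at h'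
      linarith
    have h := Real.log_lt_sub_one_of_pos (div_pos hpos hγ) hne'
    rw [Real.log_div (ne_of_gt hpos) (ne_of_gt hγ)] at h
    linarith
  have e1 : (F.card : ℝ) * (N:ℝ) * γnew / γnew = (F.card : ℝ) * (N:ℝ) := by
    field_simp
  have e2 : (F.card : ℝ) * (N:ℝ) * γnew / γ = (F.card : ℝ) * (N:ℝ) * (γnew / γ) := by
    rw [mul_div_assoc]
  rw [e1, e2]
  nlinarith [mul_lt_mul_of_pos_left key (mul_pos hd' hNR)]
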